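/- For finite-horizon Markov Games with δ-continuous best-response at π^E: if the learned product policy π has time-uniform BC error ε_BC and every best response π*_i satisfies max_t E_{s∼μ^t_{π^E}}[‖π*_{i,t}(·|s) − π^E_{i,t}(·|s)‖₁] ≤ δ(ε_BC), then NashGap(π) ≤ (2n·ε_BC + δ(ε_BC))·H². -/

import Mathlib

open scoped BigOperators

namespace FH

/-- Finite-horizon `n`-player Markov Game with horizon `H` and time-dependent
rewards. -/
structure Game (n : ℕ) (S : Type) (A : Fin n → Type) [Fintype S] [∀ i, Fintype (A i)] where
  P : S → (∀ i, A i) → S → ℝ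
  r : Fin n → ℕ → S → (∀ i, A i) → ℝ
  ν₀ : S → ℝ
  H : ℕ

variable {n : ℕ} {S : Type} {A : Fin n → Type} [Fintype S] [∀ i, Fintype (A i)]

/-- A non-stationary policy: a distribution over actions at each time and state. -/
def IsPol {B : Type} [Fintype B] (π : ℕ → S → B → ℝ) : Prop :=
  (∀ t s b, 0 ≤ π t s b) ∧ ∀ t s, ∑ b, π t s b = 1

/-- Validity of the game data: `ν₀` a distribution, `P` a kernel, rewards in `[-1,1]`. -/
def IsGame (G : Game n S A) : Prop :=
  (∀ s, 0 ≤ G.ν₀ s) ∧ (∑ s, G.ν₀ s = 1) ∧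
    (∀ s a, (∀ s', 0 ≤ G.P s a s') ∧ ∑ s', G.P s a s' = 1) ∧
    (∀ i t s a, |G.r i t s a| ≤ 1)

/-- Joint (product) non-stationary policy. -/
def joint (π : ∀ i, ℕ → S → A i → ℝ) : ℕ → S → (∀ i, A i) → ℝ :=
  fun t s a => ∏ i, π i t s (a i)

/-- `stateDist G π t s = P(s_t = s)` (the time-`t` state visitation, `μ^t_π`). -/
def stateDist (G : Game n S A) (π : ℕ → S → (∀ i, A i) → ℝ) : ℕ → S → ℝ
  | 0 => G.ν₀
  | t + 1 => fun s' => ∑ s : S, ∑ a : (∀ i, A i), stateDist G π t s * π t s a * G.P s a s'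

/-- Value-to-go with `k` remaining steps starting at time `t` in state `s`. -/
def Vaux (G : Game n S A) (i : Fin n) (π : ℕ → S → (∀ i, A i) → ℝ) :
    ℕ → ℕ → S → ℝ
  | 0, _, _ => 0
  | k + 1, t, s => ∑ a : (∀ i, A i), π t s a *
      (G.r i t s a + ∑ s' : S, G.P s a s' * Vaux G i π k (t + 1) s')

/-- `V_{i,t}^π(s)`: expected cumulative reward from time `t` to `H-1` given `s_t = s`. -/
def Vt (G : Game n S A) (i : Fin n) (π : ℕ → S → (∀ i, A i) → ℝ)
    (t : ℕ) (s : S) : ℝ :=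
  Vaux G i π (G.H - t) t s

/-- `V_i^π(ν₀)`. -/
def value (G : Game n S A) (i : Fin n) (π : ℕ → S → (∀ i, A i) → ℝ) : ℝ :=
  ∑ s : S, G.ν₀ s * Vt G i π 0 s

/-- `Q_{i,t}^π(s,a) = r_i^t(s,a) + ∑_{s'} P(s'|s,a) V_{i,t+1}^π(s')`. -/
def Qt (G : Game n S A) (i : Fin n) (π : ℕ → S → (∀ i, A i) → ℝ)
    (t : ℕ) (s : S) (a : ∀ i, A i) : ℝ :=
  G.r i t s a + ∑ s' : S, G.P s a s' * Vt G i π (t + 1) s'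

/-- Unilateral deviation of player `i` to `πi'`. -/
def dev (π : ∀ i, ℕ → S → A i → ℝ) (i : Fin n) (πi' : ℕ → S → A i → ℝ) :
    ∀ j, ℕ → S → A j → ℝ :=
  Function.update π i πi'

/-- Time-`t` behavioral cloning error of player `i`:
`E_{s ∼ μ^t_{π^E}} ‖π_{i,t}(·|s) − π^E_{i,t}(·|s)‖₁`. -/
def bcErrT (G : Game n S A) (πE π : ∀ i, ℕ → S → A i → ℝ)
    (i : Fin n) (t : ℕ) : ℝ :=
  ∑ s : S, stateDist G (joint πE) t s * ∑ b : A i, |π i t s b - πE i t s b|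

end FH

namespace FH

section Aux

variable {n : ℕ} {S : Type} {A : Fin n → Type} [Fintype S] [∀ i, Fintype (A i)]

variable (G : Game n S A)

lemma vaux_abs_le (hG : IsGame G) (i : Fin n) {p : ℕ → S → (∀ i, A i) → ℝ}
    (hp : IsPol p) : ∀ k t s, |Vaux G i p k t s| ≤ (k : ℝ) := by
  intro k
  induction k with
  | zero => intro t s; simp [Vaux]
  | succ k ih =>
    intro t s
    have hQ : ∀ a, |G.r i t s a + ∑ s' : S, G.P s a s' * Vaux G i p k (t+1) s'|
        ≤ (k : ℝ) + 1 := by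
      intro a
      have h1 : |∑ s' : S, G.P s a s' * Vaux G i p k (t+1) s'| ≤ (k : ℝ) := by
        calc |∑ s' : S, G.P s a s' * Vaux G i p k (t+1) s'|
            ≤ ∑ s' : S, |G.P s a s' * Vaux G i p k (t+1) s'| := Finset.abs_sum_le_sum_abs _ _
          _ ≤ ∑ s' : S, G.P s a s' * (k : ℝ) := by
              refine Finset.sum_le_sum fun s' _ => ?_
              rw [abs_mul, abs_of_nonneg ((hG.2.2.1 s a).1 s')]
              exact mul_le_mul_of_nonneg_left (ih (t+1) s') ((hG.2.2.1 s a).1 s')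
          _ = (k : ℝ) := by rw [← Finset.sum_mul, (hG.2.2.1 s a).2, one_mul]
      calc |G.r i t s a + ∑ s' : S, G.P s a s' * Vaux G i p k (t+1) s'|
          ≤ |G.r i t s a| + |∑ s' : S, G.P s a s' * Vaux G i p k (t+1) s'| := abs_add_le _ _
        _ ≤ 1 + (k : ℝ) := add_le_add (hG.2.2.2 i t s a) h1
        _ = (k : ℝ) + 1 := by ring
    calc |Vaux G i p (k+1) t s|
        ≤ ∑ a : (∀ i, A i), |p t s a * (G.r i t s a + ∑ s' : S, G.P s a s' * Vaux G i p k (t+1) s')| := by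
          rw [Vaux]; exact Finset.abs_sum_le_sum_abs _ _
      _ ≤ ∑ a : (∀ i, A i), p t s a * ((k : ℝ) + 1) := by
          refine Finset.sum_le_sum fun a _ => ?_
          rw [abs_mul, abs_of_nonneg (hp.1 t s a)]
          exact mul_le_mul_of_nonneg_left (hQ a) (hp.1 t s a)
      _ = (k : ℝ) + 1 := by rw [← Finset.sum_mul, hp.2 t s, one_mul]
      _ = ((k+1 : ℕ) : ℝ) := by push_cast; ring

lemma stateDist_nonneg (hG : IsGame G) {q : ℕ → S → (∀ i, A i) → ℝ}
    (hq : IsPol q) : ∀ t s, 0 ≤ stateDist G q t s := by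
  intro t
  induction t with
  | zero => exact hG.1
  | succ t ih =>
    intro s'
    refine Finset.sum_nonneg fun s _ => Finset.sum_nonneg fun a _ => ?_
    exact mul_nonneg (mul_nonneg (ih s) (hq.1 t s a)) ((hG.2.2.1 s a).1 s')

/-- expected joint-action L1 distance at time `t` under the visitation of `q`. -/
def expL1 (p q : ℕ → S → (∀ i, A i) → ℝ) (t : ℕ) : ℝ :=
  ∑ s : S, stateDist G q t s * ∑ a : (∀ i, A i), |p t s a - q t s a|

lemma expL1_nonneg (hG : IsGame G) {p q : ℕ → S → (∀ i, A i) → ℝ}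
    (hq : IsPol q) (t : ℕ) : 0 ≤ expL1 G p q t :=
  Finset.sum_nonneg fun s _ => mul_nonneg (stateDist_nonneg G hG hq t s)
    (Finset.sum_nonneg fun a _ => abs_nonneg _)



lemma perf_diff (G : Game n S A) (hG : IsGame G) (i : Fin n)
    {p q : ℕ → S → (∀ i, A i) → ℝ} (hp : IsPol p) (hq : IsPol q) :
    ∀ k t, |∑ s : S, stateDist G q t s * (Vaux G i p k t s - Vaux G i q k t s)|
      ≤ (k : ℝ) * ∑ u ∈ Finset.range k, expL1 G p q (t + u) := by
  intro k
  induction k with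
  | zero => intro t; simp [Vaux]
  | succ k ih =>
    intro t
    set Qp : S → (∀ i, A i) → ℝ := fun s a =>
      G.r i t s a + ∑ s' : S, G.P s a s' * Vaux G i p k (t+1) s' with hQp
    have hQbd : ∀ s a, |Qp s a| ≤ (k : ℝ) + 1 := by
      intro s a
      have h1 : |∑ s' : S, G.P s a s' * Vaux G i p k (t+1) s'| ≤ (k : ℝ) := by
        calc |∑ s' : S, G.P s a s' * Vaux G i p k (t+1) s'|
            ≤ ∑ s' : S, |G.P s a s' * Vaux G i p k (t+1) s'| := Finset.abs_sum_le_sum_abs _ _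
          _ ≤ ∑ s' : S, G.P s a s' * (k : ℝ) := by
              refine Finset.sum_le_sum fun s' _ => ?_
              rw [abs_mul, abs_of_nonneg ((hG.2.2.1 s a).1 s')]
              exact mul_le_mul_of_nonneg_left (vaux_abs_le G hG i hp k (t+1) s')
                ((hG.2.2.1 s a).1 s')
          _ = (k : ℝ) := by rw [← Finset.sum_mul, (hG.2.2.1 s a).2, one_mul]
      calc |Qp s a| ≤ |G.r i t s a| + |∑ s' : S, G.P s a s' * Vaux G i p k (t+1) s'| :=
            abs_add_le _ _
        _ ≤ 1 + (k : ℝ) := add_le_add (hG.2.2.2 i t s a) h1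
        _ = (k : ℝ) + 1 := by ring
    -- pointwise decomposition
    have hdec : ∀ s, Vaux G i p (k+1) t s - Vaux G i q (k+1) t s
        = (∑ a : (∀ i, A i), (p t s a - q t s a) * Qp s a)
          + ∑ a : (∀ i, A i), q t s a * ∑ s' : S, G.P s a s'
              * (Vaux G i p k (t+1) s' - Vaux G i q k (t+1) s') := by
      intro s
      rw [Vaux, Vaux, ← Finset.sum_sub_distrib, ← Finset.sum_add_distrib]
      refine Finset.sum_congr rfl fun a _ => ?_
      have : ∑ s' : S, G.P s a s' * (Vaux G i p k (t+1) s' - Vaux G i q k (t+1) s')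
          = (∑ s' : S, G.P s a s' * Vaux G i p k (t+1) s')
            - ∑ s' : S, G.P s a s' * Vaux G i q k (t+1) s' := by
        rw [← Finset.sum_sub_distrib]
        exact Finset.sum_congr rfl fun s' _ => by ring
      rw [this, hQp]; ring
    -- second term rewrites to next-time state distribution
    set ΔV : S → ℝ := fun s' => Vaux G i p k (t+1) s' - Vaux G i q k (t+1) s' with hΔV
    have hswap : ∑ s : S, stateDist G q t s * ∑ a : (∀ i, A i), q t s a *
          ∑ s' : S, G.P s a s' * ΔV s'
        = ∑ s' : S, stateDist G q (t+1) s' * ΔV s' := by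
      have e1 : ∀ s : S, stateDist G q t s * ∑ a : (∀ i, A i), q t s a *
            ∑ s' : S, G.P s a s' * ΔV s'
          = ∑ a : (∀ i, A i), ∑ s' : S,
              stateDist G q t s * q t s a * G.P s a s' * ΔV s' := by
        intro s
        simp only [Finset.mul_sum]
        exact Finset.sum_congr rfl fun a _ => Finset.sum_congr rfl fun s' _ => by ring
      have e2 : ∀ s' : S, stateDist G q (t+1) s' * ΔV s'
          = ∑ s : S, ∑ a : (∀ i, A i),
              stateDist G q t s * q t s a * G.P s a s' * ΔV s' := by
        intro s'
        have hd : stateDist G q (t+1) s'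
            = ∑ s : S, ∑ a : (∀ i, A i), stateDist G q t s * q t s a * G.P s a s' := rfl
        rw [hd, Finset.sum_mul]
        exact Finset.sum_congr rfl fun s _ => by rw [Finset.sum_mul]
      simp only [e1, e2]
      have h3 : ∀ s : S, (∑ a : (∀ i, A i), ∑ s' : S,
            stateDist G q t s * q t s a * G.P s a s' * ΔV s')
          = ∑ s' : S, ∑ a : (∀ i, A i),
            stateDist G q t s * q t s a * G.P s a s' * ΔV s' := fun s => Finset.sum_comm
      simp only [h3]
      exact Finset.sum_comm
    have hfirst : |∑ s : S, stateDist G q t s * ∑ a : (∀ i, A i), (p t s a - q t s a) * Qp s a|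
        ≤ ((k : ℝ) + 1) * expL1 G p q t := by
      calc |∑ s : S, stateDist G q t s * ∑ a : (∀ i, A i), (p t s a - q t s a) * Qp s a|
          ≤ ∑ s : S, |stateDist G q t s * ∑ a : (∀ i, A i), (p t s a - q t s a) * Qp s a| :=
            Finset.abs_sum_le_sum_abs _ _
        _ ≤ ∑ s : S, stateDist G q t s * (((k:ℝ)+1) * ∑ a : (∀ i, A i), |p t s a - q t s a|) := by
            refine Finset.sum_le_sum fun s _ => ?_
            rw [abs_mul, abs_of_nonneg (stateDist_nonneg G hG hq t s)]
            refine mul_le_mul_of_nonneg_left ?_ (stateDist_nonneg G hG hq t s)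
            calc |∑ a : (∀ i, A i), (p t s a - q t s a) * Qp s a|
                ≤ ∑ a : (∀ i, A i), |(p t s a - q t s a) * Qp s a| :=
                  Finset.abs_sum_le_sum_abs _ _
              _ ≤ ∑ a : (∀ i, A i), |p t s a - q t s a| * ((k:ℝ)+1) := by
                  refine Finset.sum_le_sum fun a _ => ?_
                  rw [abs_mul]
                  exact mul_le_mul_of_nonneg_left (hQbd s a) (abs_nonneg _)
              _ = ((k:ℝ)+1) * ∑ a : (∀ i, A i), |p t s a - q t s a| := by
                  rw [← Finset.sum_mul]; ring
        _ = ((k : ℝ) + 1) * expL1 G p q t := by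
            rw [expL1, Finset.mul_sum]
            exact Finset.sum_congr rfl fun s _ => by ring
    have hEnn : ∀ u, 0 ≤ expL1 G p q u := fun u => expL1_nonneg G hG hq u
    have key : |∑ s : S, stateDist G q t s * (Vaux G i p (k+1) t s - Vaux G i q (k+1) t s)|
        ≤ ((k:ℝ)+1) * expL1 G p q t
          + (k : ℝ) * ∑ u ∈ Finset.range k, expL1 G p q (t + 1 + u) := by
      have : ∑ s : S, stateDist G q t s * (Vaux G i p (k+1) t s - Vaux G i q (k+1) t s)
          = (∑ s : S, stateDist G q t s * ∑ a : (∀ i, A i), (p t s a - q t s a) * Qp s a)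
            + ∑ s' : S, stateDist G q (t+1) s' *
                (Vaux G i p k (t+1) s' - Vaux G i q k (t+1) s') := by
        rw [← hswap, ← Finset.sum_add_distrib]
        exact Finset.sum_congr rfl fun s _ => by rw [hdec s]; ring
      rw [this]
      exact le_trans (abs_add_le _ _) (add_le_add hfirst (ih (t+1)))
    refine le_trans key ?_
    have hsum : ∑ u ∈ Finset.range (k+1), expL1 G p q (t + u)
        = expL1 G p q t + ∑ u ∈ Finset.range k, expL1 G p q (t + 1 + u) := by
      rw [Finset.sum_range_succ']
      have h : (∑ u ∈ Finset.range k, expL1 G p q (t + (u + 1)))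
          = ∑ u ∈ Finset.range k, expL1 G p q (t + 1 + u) :=
        Finset.sum_congr rfl fun u _ => by rw [Nat.add_comm u 1, ← Nat.add_assoc]
      rw [h, Nat.add_zero]
      exact add_comm _ _
    rw [hsum]
    have h1 : (k : ℝ) * ∑ u ∈ Finset.range k, expL1 G p q (t + 1 + u)
        ≤ ((k:ℝ)+1) * ∑ u ∈ Finset.range k, expL1 G p q (t + 1 + u) := by
      refine mul_le_mul_of_nonneg_right (by linarith) ?_
      exact Finset.sum_nonneg fun u _ => hEnn _
    push_cast
    nlinarith [hEnn t, Finset.sum_nonneg (fun u (_ : u ∈ Finset.range k) => hEnn (t+1+u))]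

lemma value_diff_abs (G : Game n S A) (hG : IsGame G) (i : Fin n)
    {p q : ℕ → S → (∀ i, A i) → ℝ} (hp : IsPol p) (hq : IsPol q) :
    |value G i p - value G i q| ≤ (G.H : ℝ) * ∑ t ∈ Finset.range G.H, expL1 G p q t := by
  have h0 : value G i p - value G i q
      = ∑ s : S, stateDist G q 0 s * (Vaux G i p G.H 0 s - Vaux G i q G.H 0 s) := by
    rw [value, value, ← Finset.sum_sub_distrib]
    refine Finset.sum_congr rfl fun s _ => ?_
    have hd0 : stateDist G q 0 s = G.ν₀ s := rfl
    simp only [Vt, Nat.sub_zero, hd0]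
    ring
  rw [h0]
  have := perf_diff G hG i hp hq G.H 0
  simpa using this


lemma sum_prod_pi (h : ∀ j, A j → ℝ) :
    ∑ a : (∀ j, A j), ∏ j, h j (a j) = ∏ j, ∑ b, h j b := by
  rw [Finset.prod_univ_sum (fun _ => Finset.univ) h]
  rw [Fintype.piFinset_univ]

lemma joint_isPol {π : ∀ i, ℕ → S → A i → ℝ} (hπ : ∀ i, IsPol (π i)) :
    IsPol (joint π) := by
  constructor
  · intro t s a
    exact Finset.prod_nonneg fun j _ => (hπ j).1 t s (a j)
  · intro t s
    rw [show (∑ a : (∀ j, A j), joint π t s a)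
        = ∑ a : (∀ j, A j), ∏ j, (fun b => π j t s b) (a j) from rfl]
    rw [sum_prod_pi]
    simp [(hπ _).2 t s]

lemma prodL1 (v w : ∀ j, A j → ℝ)
    (hv0 : ∀ j b, 0 ≤ v j b) (hv1 : ∀ j, ∑ b, v j b = 1)
    (hw0 : ∀ j b, 0 ≤ w j b) (hw1 : ∀ j, ∑ b, w j b = 1) :
    ∑ a : (∀ j, A j), |(∏ j, v j (a j)) - ∏ j, w j (a j)|
      ≤ ∑ j, ∑ b, |v j b - w j b| := by
  have claim : ∀ T : Finset (Fin n),
      ∑ a : (∀ j, A j), |(∏ j, (if j ∈ T then v j (a j) else w j (a j))) - ∏ j, w j (a j)|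
        ≤ ∑ j ∈ T, ∑ b, |v j b - w j b| := by
    intro T
    induction T using Finset.induction_on with
    | empty => simp
    | @insert i T hiT ih =>
      classical
      set R : (∀ j, A j) → ℝ := fun a =>
        ∏ j ∈ Finset.univ.erase i, (if j ∈ T then v j (a j) else w j (a j)) with hR
      have hR0 : ∀ a, 0 ≤ R a := fun a =>
        Finset.prod_nonneg fun j _ => by
          by_cases hj : j ∈ T <;> simp [hj, hv0, hw0]
      have hmIns : ∀ a : (∀ j, A j),
          (∏ j, (if j ∈ insert i T then v j (a j) else w j (a j))) = v i (a i) * R a := by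
        intro a
        rw [← Finset.mul_prod_erase Finset.univ
          (fun j => if j ∈ insert i T then v j (a j) else w j (a j)) (Finset.mem_univ i)]
        congr 1
        · simp
        · refine Finset.prod_congr rfl fun j hj => ?_
          have hji : j ≠ i := Finset.ne_of_mem_erase hj
          simp [Finset.mem_insert, hji]
      have hmT : ∀ a : (∀ j, A j),
          (∏ j, (if j ∈ T then v j (a j) else w j (a j))) = w i (a i) * R a := by
        intro a
        rw [← Finset.mul_prod_erase Finset.univ
          (fun j => if j ∈ T then v j (a j) else w j (a j)) (Finset.mem_univ i)]
        congr 1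
        simp [hiT]
      set h : ∀ j, A j → ℝ := fun j b =>
        if j = i then |v j b - w j b| else (if j ∈ T then v j b else w j b) with hh
      have hfirst : ∑ a : (∀ j, A j), |v i (a i) - w i (a i)| * R a
          = ∑ b, |v i b - w i b| := by
        have e : ∀ a : (∀ j, A j), |v i (a i) - w i (a i)| * R a = ∏ j, h j (a j) := by
          intro a
          rw [← Finset.mul_prod_erase Finset.univ (fun j => h j (a j)) (Finset.mem_univ i)]
          congr 1
          · simp [hh]
          · refine Finset.prod_congr rfl fun j hj => ?_
            simp [hh, Finset.ne_of_mem_erase hj]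
        simp only [e]
        rw [sum_prod_pi]
        rw [← Finset.mul_prod_erase Finset.univ (fun j => ∑ b, h j b) (Finset.mem_univ i)]
        have h1 : (∑ b, h i b) = ∑ b, |v i b - w i b| := by simp [hh]
        have h2 : ∀ j ∈ Finset.univ.erase i, (∑ b, h j b) = 1 := by
          intro j hj
          have hji : j ≠ i := Finset.ne_of_mem_erase hj
          by_cases hjT : j ∈ T <;> simp [hh, hji, hjT, hv1 j, hw1 j]
        rw [h1, Finset.prod_congr rfl h2]
        simp
      rw [Finset.sum_insert hiT]
      calc ∑ a : (∀ j, A j),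
            |(∏ j, (if j ∈ insert i T then v j (a j) else w j (a j))) - ∏ j, w j (a j)|
          ≤ ∑ a : (∀ j, A j), (|v i (a i) - w i (a i)| * R a
              + |(∏ j, (if j ∈ T then v j (a j) else w j (a j))) - ∏ j, w j (a j)|) := by
            refine Finset.sum_le_sum fun a _ => ?_
            rw [hmIns a]
            have e2 : v i (a i) * R a - ∏ j, w j (a j)
                = (v i (a i) - w i (a i)) * R a
                  + ((∏ j, (if j ∈ T then v j (a j) else w j (a j))) - ∏ j, w j (a j)) := by
              rw [hmT a]; ring
            rw [e2]
            refine le_trans (abs_add_le _ _) ?_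
            rw [abs_mul, abs_of_nonneg (hR0 a)]
        _ = (∑ a : (∀ j, A j), |v i (a i) - w i (a i)| * R a)
              + ∑ a : (∀ j, A j),
                |(∏ j, (if j ∈ T then v j (a j) else w j (a j))) - ∏ j, w j (a j)| :=
            Finset.sum_add_distrib
        _ ≤ (∑ b, |v i b - w i b|) + ∑ j ∈ T, ∑ b, |v j b - w j b| :=
            add_le_add (le_of_eq hfirst) ih
  have := claim Finset.univ
  simpa using this


lemma expL1_joint_le (G : Game n S A) (hG : IsGame G)
    (μ ν : ∀ i, ℕ → S → A i → ℝ) (hμ : ∀ i, IsPol (μ i)) (hν : ∀ i, IsPol (ν i)) (t : ℕ) :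
    expL1 G (joint μ) (joint ν) t
      ≤ ∑ j, ∑ s : S, stateDist G (joint ν) t s * ∑ b, |μ j t s b - ν j t s b| := by
  have hd : ∀ s, 0 ≤ stateDist G (joint ν) t s :=
    stateDist_nonneg G hG (joint_isPol hν) t
  calc expL1 G (joint μ) (joint ν) t
      ≤ ∑ s : S, stateDist G (joint ν) t s * ∑ j, ∑ b, |μ j t s b - ν j t s b| := by
        refine Finset.sum_le_sum fun s _ => mul_le_mul_of_nonneg_left ?_ (hd s)
        exact prodL1 (fun j => μ j t s) (fun j => ν j t s)
          (fun j b => (hμ j).1 t s b) (fun j => (hμ j).2 t s)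
          (fun j b => (hν j).1 t s b) (fun j => (hν j).2 t s)
    _ = ∑ j, ∑ s : S, stateDist G (joint ν) t s * ∑ b, |μ j t s b - ν j t s b| := by
        simp only [Finset.mul_sum]
        exact Finset.sum_comm

attribute [local instance] Classical.propDecidable

/-- one-step action-value for player `i` when the others play `π`, with
future value function `V`. -/
noncomputable def QOf (G : Game n S A) (i : Fin n) (π : ∀ j, ℕ → S → A j → ℝ) (V : S → ℝ)
    (t : ℕ) (s : S) (b : A i) : ℝ :=
  ∑ a : (∀ j, A j),
    (if a i = b then ∏ j ∈ Finset.univ.erase i, π j t s (a j) else 0) *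
      (G.r i t s a + ∑ s' : S, G.P s a s' * V s')

/-- optimal value for player `i`'s best response against `π`. -/
noncomputable def Vstar (G : Game n S A) (i : Fin n) [Nonempty (A i)]
    (π : ∀ j, ℕ → S → A j → ℝ) : ℕ → ℕ → S → ℝ
  | 0, _, _ => 0
  | k + 1, t, s => Finset.univ.sup' Finset.univ_nonempty
      (QOf G i π (Vstar G i π k (t + 1)) t s)

/-- greedy action. -/
noncomputable def bstar (G : Game n S A) (i : Fin n) [Nonempty (A i)]
    (π : ∀ j, ℕ → S → A j → ℝ) (t : ℕ) (s : S) : A i :=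
  (Finset.exists_mem_eq_sup' Finset.univ_nonempty
    (QOf G i π (Vstar G i π (G.H - t - 1) (t + 1)) t s)).choose

lemma bstar_spec (G : Game n S A) (i : Fin n) [Nonempty (A i)]
    (π : ∀ j, ℕ → S → A j → ℝ) (t : ℕ) (s : S) :
    Finset.univ.sup' Finset.univ_nonempty
      (QOf G i π (Vstar G i π (G.H - t - 1) (t + 1)) t s)
    = QOf G i π (Vstar G i π (G.H - t - 1) (t + 1)) t s (bstar G i π t s) :=
  (Finset.exists_mem_eq_sup' Finset.univ_nonempty
    (QOf G i π (Vstar G i π (G.H - t - 1) (t + 1)) t s)).choose_spec.2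

/-- greedy policy. -/
noncomputable def piStar (G : Game n S A) (i : Fin n) [Nonempty (A i)]
    (π : ∀ j, ℕ → S → A j → ℝ) : ℕ → S → A i → ℝ :=
  fun t s b => if b = bstar G i π t s then 1 else 0

lemma piStar_isPol (G : Game n S A) (i : Fin n) [Nonempty (A i)]
    (π : ∀ j, ℕ → S → A j → ℝ) : IsPol (piStar G i π) := by
  constructor
  · intro t s b; unfold piStar; split <;> norm_num
  · intro t s; simp [piStar]


lemma joint_dev (π : ∀ j, ℕ → S → A j → ℝ) (i : Fin n) (q : ℕ → S → A i → ℝ)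
    (t : ℕ) (s : S) (a : ∀ j, A j) :
    joint (dev π i q) t s a
      = q t s (a i) * ∏ j ∈ Finset.univ.erase i, π j t s (a j) := by
  unfold joint dev
  rw [← Finset.mul_prod_erase Finset.univ
    (fun j => Function.update π i q j t s (a j)) (Finset.mem_univ i)]
  congr 1
  · rw [Function.update_self]
  · exact Finset.prod_congr rfl fun j hj => by
      rw [Function.update_of_ne (Finset.ne_of_mem_erase hj)]

lemma dev_isPol {π : ∀ j, ℕ → S → A j → ℝ} (hπ : ∀ j, IsPol (π j)) (i : Fin n)
    {q : ℕ → S → A i → ℝ} (hq : IsPol q) : ∀ j, IsPol (dev π i q j) := by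
  intro j
  by_cases h : j = i
  · subst h; unfold dev; rw [Function.update_self]; exact hq
  · unfold dev; rw [Function.update_of_ne h]; exact hπ j

lemma vaux_dev_succ (G : Game n S A) (i : Fin n) (π : ∀ j, ℕ → S → A j → ℝ)
    (q : ℕ → S → A i → ℝ) (k t : ℕ) (s : S) :
    Vaux G i (joint (dev π i q)) (k+1) t s
      = ∑ b : A i, q t s b
          * QOf G i π (Vaux G i (joint (dev π i q)) k (t+1)) t s b := by
  set C : (∀ j, A j) → ℝ := fun a =>
    G.r i t s a + ∑ s' : S, G.P s a s' * Vaux G i (joint (dev π i q)) k (t+1) s' with hC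
  set w : (∀ j, A j) → ℝ := fun a => ∏ j ∈ Finset.univ.erase i, π j t s (a j) with hw
  have hrhs : ∀ b : A i, q t s b * QOf G i π (Vaux G i (joint (dev π i q)) k (t+1)) t s b
      = ∑ a : (∀ j, A j), (if a i = b then q t s b * (w a * C a) else 0) := by
    intro b
    unfold QOf
    rw [Finset.mul_sum]
    refine Finset.sum_congr rfl fun a _ => ?_
    by_cases h : a i = b
    · simp [h, mul_assoc, hw, hC]
    · simp [h]
  calc Vaux G i (joint (dev π i q)) (k+1) t s
      = ∑ a : (∀ j, A j), q t s (a i) * (w a * C a) := by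
        rw [Vaux]
        refine Finset.sum_congr rfl fun a _ => ?_
        rw [joint_dev]; ring
    _ = ∑ a : (∀ j, A j), ∑ b : A i, (if a i = b then q t s b * (w a * C a) else 0) := by
        refine Finset.sum_congr rfl fun a _ => ?_
        rw [Finset.sum_ite_eq Finset.univ (a i) (fun b => q t s b * (w a * C a))]
        simp
    _ = ∑ b : A i, ∑ a : (∀ j, A j), (if a i = b then q t s b * (w a * C a) else 0) :=
        Finset.sum_comm
    _ = ∑ b : A i, q t s b * QOf G i π (Vaux G i (joint (dev π i q)) k (t+1)) t s b := by
        exact Finset.sum_congr rfl fun b _ => (hrhs b).symm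

lemma qOf_mono (G : Game n S A) (hG : IsGame G) (i : Fin n)
    (π : ∀ j, ℕ → S → A j → ℝ) (hπ : ∀ j, IsPol (π j))
    {V V' : S → ℝ} (hVV' : ∀ s', V s' ≤ V' s') (t : ℕ) (s : S) (b : A i) :
    QOf G i π V t s b ≤ QOf G i π V' t s b := by
  unfold QOf
  refine Finset.sum_le_sum fun a _ => ?_
  have hw0 : (0:ℝ) ≤ (if a i = b then ∏ j ∈ Finset.univ.erase i, π j t s (a j) else 0) := by
    split
    · exact Finset.prod_nonneg fun j _ => (hπ j).1 t s (a j)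
    · exact le_refl 0
  refine mul_le_mul_of_nonneg_left ?_ hw0
  refine add_le_add (le_refl _) ?_
  exact Finset.sum_le_sum fun s' _ =>
    mul_le_mul_of_nonneg_left (hVV' s') ((hG.2.2.1 s a).1 s')

lemma vaux_le_vstar (G : Game n S A) (hG : IsGame G) (i : Fin n) [Nonempty (A i)]
    (π : ∀ j, ℕ → S → A j → ℝ) (hπ : ∀ j, IsPol (π j))
    {q : ℕ → S → A i → ℝ} (hq : IsPol q) :
    ∀ k t s, Vaux G i (joint (dev π i q)) k t s ≤ Vstar G i π k t s := by
  intro k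
  induction k with
  | zero => intro t s; simp [Vaux, Vstar]
  | succ k ih =>
    intro t s
    rw [vaux_dev_succ, Vstar]
    calc ∑ b : A i, q t s b * QOf G i π (Vaux G i (joint (dev π i q)) k (t+1)) t s b
        ≤ ∑ b : A i, q t s b * QOf G i π (Vstar G i π k (t+1)) t s b := by
          refine Finset.sum_le_sum fun b _ => mul_le_mul_of_nonneg_left ?_ (hq.1 t s b)
          exact qOf_mono G hG i π hπ (fun s' => ih (t+1) s') t s b
      _ ≤ ∑ b : A i, q t s b * Finset.univ.sup' Finset.univ_nonempty
            (QOf G i π (Vstar G i π k (t+1)) t s) := by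
          refine Finset.sum_le_sum fun b _ => mul_le_mul_of_nonneg_left ?_ (hq.1 t s b)
          exact Finset.le_sup' _ (Finset.mem_univ b)
      _ = Finset.univ.sup' Finset.univ_nonempty (QOf G i π (Vstar G i π k (t+1)) t s) := by
          rw [← Finset.sum_mul, hq.2 t s, one_mul]

lemma vaux_piStar_eq (G : Game n S A) (i : Fin n) [Nonempty (A i)]
    (π : ∀ j, ℕ → S → A j → ℝ) :
    ∀ k t s, k + t = G.H →
      Vaux G i (joint (dev π i (piStar G i π))) k t s = Vstar G i π k t s := by
  intro k
  induction k with
  | zero => intro t s _; simp [Vaux, Vstar]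
  | succ k ih =>
    intro t s hk
    rw [vaux_dev_succ]
    have hIH : Vaux G i (joint (dev π i (piStar G i π))) k (t+1) = Vstar G i π k (t+1) := by
      funext s'
      exact ih (t+1) s' (by omega)
    rw [hIH]
    have hsum : ∑ b : A i, piStar G i π t s b * QOf G i π (Vstar G i π k (t+1)) t s b
        = QOf G i π (Vstar G i π k (t+1)) t s (bstar G i π t s) := by
      unfold piStar
      simp [ite_mul]
    rw [hsum]
    have hk' : G.H - t - 1 = k := by omega
    rw [Vstar, ← hk', bstar_spec G i π t s, hk']

lemma value_le_piStar (G : Game n S A) (hG : IsGame G) (i : Fin n) [Nonempty (A i)]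
    (π : ∀ j, ℕ → S → A j → ℝ) (hπ : ∀ j, IsPol (π j))
    {q : ℕ → S → A i → ℝ} (hq : IsPol q) :
    value G i (joint (dev π i q)) ≤ value G i (joint (dev π i (piStar G i π))) := by
  unfold value
  refine Finset.sum_le_sum fun s _ => mul_le_mul_of_nonneg_left ?_ (hG.1 s)
  unfold Vt
  rw [Nat.sub_zero]
  rw [vaux_piStar_eq G i π G.H 0 s (by omega)]
  exact vaux_le_vstar G hG i π hπ hq G.H 0 s


lemma bcErrT_nonneg (G : Game n S A) (hG : IsGame G)
    (πE π : ∀ i, ℕ → S → A i → ℝ) (hE : ∀ i, IsPol (πE i)) (i : Fin n) (t : ℕ) :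
    0 ≤ bcErrT G πE π i t :=
  Finset.sum_nonneg fun s _ => mul_nonneg
    (stateDist_nonneg G hG (joint_isPol hE) t s)
    (Finset.sum_nonneg fun b _ => abs_nonneg _)

end Aux

/-- finite-horizon δ-continuity bound: if `π` has time-uniform BC
error `ε_BC` and every best response `π*_i` to `π_{-i}` stays within expected L1
distance `δ(ε_BC)` of `π^E_i` under the expert visitation at every time step,
then `NashGap(π) ≤ (2 n ε_BC + δ(ε_BC)) H²`. -/
theorem delta_nash_gap_finite {n : ℕ} {S : Type} {A : Fin n → Type}
    [Fintype S] [∀ i, Fintype (A i)]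
    (G : Game n S A) (hG : IsGame G)
    (δ : ℝ → ℝ) (hδ : ∀ ε > (0:ℝ), 0 ≤ δ ε ∧ δ ε ≤ 2)
    (πE π : ∀ i, ℕ → S → A i → ℝ)
    (hE : ∀ i, IsPol (πE i)) (hπ : ∀ i, IsPol (π i))
    (εBC : ℝ) (hBC : ∀ (i : Fin n), ∀ t < G.H, bcErrT G πE π i t ≤ εBC)
    (hBR : ∀ (i : Fin n) (πiStar : ℕ → S → A i → ℝ), IsPol πiStar →
      (∀ (πi'' : ℕ → S → A i → ℝ), IsPol πi'' →
        value G i (joint (dev π i πi'')) ≤ value G i (joint (dev π i πiStar))) →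
      ∀ t < G.H,
        ∑ s : S, stateDist G (joint πE) t s *
          ∑ b : A i, |πiStar t s b - πE i t s b| ≤ δ εBC) :
    ∀ (i : Fin n) (πi' : ℕ → S → A i → ℝ), IsPol πi' →
      value G i (joint (dev π i πi')) - value G i (joint π) ≤
        (2 * n * εBC + δ εBC) * (G.H : ℝ) ^ 2 := by
  classical
  intro i πi' hπi'
  -- nonemptiness of S and of all action sets
  have hS : (Finset.univ : Finset S).Nonempty :=
    Finset.nonempty_of_sum_ne_zero (by rw [hG.2.1]; norm_num)
  obtain ⟨s₀, _⟩ := hS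
  haveI hne : ∀ j, Nonempty (A j) := by
    intro j
    have h1 : (∑ b, π j 0 s₀ b) = 1 := (hπ j).2 0 s₀
    have h2 : (Finset.univ : Finset (A j)).Nonempty :=
      Finset.nonempty_of_sum_ne_zero (by rw [h1]; norm_num)
    exact ⟨h2.choose⟩
  set qs : ℕ → S → A i → ℝ := piStar G i π with hqs
  have hqsPol : IsPol qs := piStar_isPol G i π
  have hdom : ∀ (πi'' : ℕ → S → A i → ℝ), IsPol πi'' →
      value G i (joint (dev π i πi'')) ≤ value G i (joint (dev π i qs)) :=
    fun πi'' h => value_le_piStar G hG i π hπ h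
  have hδstar := hBR i qs hqsPol hdom
  have hεnn : ∀ t, t < G.H → 0 ≤ εBC := fun t ht =>
    le_trans (bcErrT_nonneg G hG πE π hE i t) (hBC i t ht)
  have hdevPol : ∀ j, IsPol (dev π i qs j) := dev_isPol hπ i hqsPol
  -- per-time bounds
  have hbound1 : ∀ t ∈ Finset.range G.H,
      expL1 G (joint (dev π i qs)) (joint πE) t ≤ (n:ℝ) * εBC + δ εBC := by
    intro t ht
    rw [Finset.mem_range] at ht
    refine le_trans (expL1_joint_le G hG _ _ hdevPol hE t) ?_
    rw [← Finset.add_sum_erase Finset.univ _ (Finset.mem_univ i)]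
    have hterm_i : ∑ s : S, stateDist G (joint πE) t s *
        ∑ b, |dev π i qs i t s b - πE i t s b| ≤ δ εBC := by
      have hd : dev π i qs i = qs := by unfold dev; exact Function.update_self i qs π
      rw [hd]
      exact hδstar t ht
    have hterm_j : ∀ j ∈ Finset.univ.erase i,
        ∑ s : S, stateDist G (joint πE) t s *
          ∑ b, |dev π i qs j t s b - πE j t s b| ≤ εBC := by
      intro j hj
      have hd : dev π i qs j = π j := by
        unfold dev; exact Function.update_of_ne (Finset.ne_of_mem_erase hj) qs π
      rw [hd]
      exact hBC j t ht
    have hcard : (((Finset.univ : Finset (Fin n)).erase i).card : ℝ) ≤ (n : ℝ) := by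
      rw [Finset.card_erase_of_mem (Finset.mem_univ i), Finset.card_univ, Fintype.card_fin]
      exact_mod_cast Nat.sub_le n 1
    calc (∑ s : S, stateDist G (joint πE) t s * ∑ b, |dev π i qs i t s b - πE i t s b|)
          + ∑ j ∈ Finset.univ.erase i, ∑ s : S, stateDist G (joint πE) t s *
              ∑ b, |dev π i qs j t s b - πE j t s b|
        ≤ δ εBC + ∑ j ∈ Finset.univ.erase i, εBC :=
          add_le_add hterm_i (Finset.sum_le_sum hterm_j)
      _ = δ εBC + (((Finset.univ : Finset (Fin n)).erase i).card : ℝ) * εBC := by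
          rw [Finset.sum_const, nsmul_eq_mul]
      _ ≤ (n:ℝ) * εBC + δ εBC := by nlinarith [hεnn t ht, hcard]
  have hbound2 : ∀ t ∈ Finset.range G.H,
      expL1 G (joint π) (joint πE) t ≤ (n:ℝ) * εBC := by
    intro t ht
    rw [Finset.mem_range] at ht
    refine le_trans (expL1_joint_le G hG _ _ hπ hE t) ?_
    calc ∑ j, ∑ s : S, stateDist G (joint πE) t s * ∑ b, |π j t s b - πE j t s b|
        ≤ ∑ _j : Fin n, εBC := Finset.sum_le_sum fun j _ => hBC j t ht
      _ = (n:ℝ) * εBC := by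
          rw [Finset.sum_const, Finset.card_univ, Fintype.card_fin, nsmul_eq_mul]
  -- value chain
  have h1 : value G i (joint (dev π i πi')) ≤ value G i (joint (dev π i qs)) :=
    hdom πi' hπi'
  have hHnn : (0:ℝ) ≤ (G.H : ℝ) := Nat.cast_nonneg _
  have h2 : value G i (joint (dev π i qs)) - value G i (joint πE)
      ≤ ((n:ℝ) * εBC + δ εBC) * (G.H : ℝ) ^ 2 := by
    have habs := value_diff_abs G hG i (joint_isPol hdevPol) (joint_isPol hE)
    have hsum : ∑ t ∈ Finset.range G.H, expL1 G (joint (dev π i qs)) (joint πE) t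
        ≤ (G.H : ℝ) * ((n:ℝ) * εBC + δ εBC) := by
      refine le_trans (Finset.sum_le_sum hbound1) ?_
      rw [Finset.sum_const, Finset.card_range, nsmul_eq_mul]
    calc value G i (joint (dev π i qs)) - value G i (joint πE)
        ≤ |value G i (joint (dev π i qs)) - value G i (joint πE)| := le_abs_self _
      _ ≤ (G.H : ℝ) * ∑ t ∈ Finset.range G.H,
            expL1 G (joint (dev π i qs)) (joint πE) t := habs
      _ ≤ (G.H : ℝ) * ((G.H : ℝ) * ((n:ℝ) * εBC + δ εBC)) :=
          mul_le_mul_of_nonneg_left hsum hHnn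
      _ = ((n:ℝ) * εBC + δ εBC) * (G.H : ℝ) ^ 2 := by ring
  have h3 : value G i (joint πE) - value G i (joint π)
      ≤ (n:ℝ) * εBC * (G.H : ℝ) ^ 2 := by
    have habs := value_diff_abs G hG i (joint_isPol hπ) (joint_isPol hE)
    have hsum : ∑ t ∈ Finset.range G.H, expL1 G (joint π) (joint πE) t
        ≤ (G.H : ℝ) * ((n:ℝ) * εBC) := by
      refine le_trans (Finset.sum_le_sum hbound2) ?_
      rw [Finset.sum_const, Finset.card_range, nsmul_eq_mul]
    calc value G i (joint πE) - value G i (joint π)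
        ≤ |value G i (joint π) - value G i (joint πE)| := by
          rw [abs_sub_comm]; exact le_abs_self _
      _ ≤ (G.H : ℝ) * ∑ t ∈ Finset.range G.H, expL1 G (joint π) (joint πE) t := habs
      _ ≤ (G.H : ℝ) * ((G.H : ℝ) * ((n:ℝ) * εBC)) := mul_le_mul_of_nonneg_left hsum hHnn
      _ = (n:ℝ) * εBC * (G.H : ℝ) ^ 2 := by ring
  have : (2 * (n:ℝ) * εBC + δ εBC) * (G.H : ℝ) ^ 2
      = ((n:ℝ) * εBC + δ εBC) * (G.H : ℝ) ^ 2 + (n:ℝ) * εBC * (G.H : ℝ) ^ 2 := by ring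
  linarith


end FH
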